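/- Fix m ≥ 1. For every 1 ≤ i ≤ n, every 1 ≤ k, and every capped count vector H : G → ℕ with H u ≤ m for all u, the counting recurrence holds: N_m(i,k,H) = N_m(i−1,k,H) + Σ_{F} N_m(i−1,k−1,F), where the sum ranges over all F : G → ℕ with F u ≤ m for all u such that, for every member u, H u = min(m, F u + (1 if u ∈ S i else 0)). -/
import Mathlib


/-- The finset of the first `i` items among `Fin n`, i.e. `{0, …, i−1}`. -/
def firstItems (n i : ℕ) : Finset (Fin n) :=
  Finset.univ.filter (fun j => (j : ℕ) < i)

/-- `Nm n S m i k H` : the number of packages `P ⊆ [i]` with `card P = k` such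
that for every member `u`, `H u` is the number of items of `P` satisfying `u`,
capped at `m`. -/
def Nm (n : ℕ) {G : Type} [Fintype G] [DecidableEq G] (S : Fin n → Finset G)
    (m i k : ℕ) (H : G → ℕ) : ℕ :=
  ((firstItems n i).powerset.filter
    (fun P => P.card = k ∧
      ∀ u : G, H u = min m ((P.filter (fun j => u ∈ S j)).card))).card

lemma card_filter_insert_aux {n : ℕ} (Q : Finset (Fin n)) (a : Fin n) (ha : a ∉ Q)
    (p : Fin n → Prop) [DecidablePred p] :
    ((insert a Q).filter p).card = (Q.filter p).card + (if p a then 1 else 0) := by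
  rw [Finset.filter_insert]
  split
  · rw [Finset.card_insert_of_notMem (fun h => ha (Finset.mem_filter.mp h).1)]
  · simp

theorem stmt_13 (n m : ℕ) (G : Type) [Fintype G] [DecidableEq G]
    (S : Fin n → Finset G) (hm : 1 ≤ m)
    (i k : ℕ) (h1 : 1 ≤ i) (h2 : i ≤ n) (hk : 1 ≤ k)
    (H : G → ℕ) (hH : ∀ u, H u ≤ m) :
    Nm n S m i k H =
      Nm n S m (i - 1) k H +
        ∑ᶠ F ∈ {F : G → ℕ | (∀ u, F u ≤ m) ∧
            ∀ u : G, H u = min m (F u + if u ∈ S ⟨i - 1, by omega⟩ then 1 else 0)},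
          Nm n S m (i - 1) (k - 1) F := by
  classical
  have him : i - 1 < n := by omega
  have hfi : firstItems n i = insert ⟨i - 1, him⟩ (firstItems n (i - 1)) := by
    ext j
    simp only [firstItems, Finset.mem_filter, Finset.mem_univ, true_and, Finset.mem_insert,
      Fin.ext_iff]
    omega
  have hnm : (⟨i - 1, him⟩ : Fin n) ∉ firstItems n (i - 1) := by
    simp only [firstItems, Finset.mem_filter, Finset.mem_univ, true_and]
    omega
  set itm : Fin n := ⟨i - 1, him⟩ with hitm
  -- the finset of profiles F
  set Fs : Finset (G → ℕ) :=
    (Finset.Icc (fun _ => 0) (fun _ => m)).filter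
      (fun F => ∀ u, H u = min m (F u + if u ∈ S itm then 1 else 0)) with hFs
  have hsetEq : {F : G → ℕ | (∀ u, F u ≤ m) ∧
        ∀ u : G, H u = min m (F u + if u ∈ S ⟨i - 1, by omega⟩ then 1 else 0)} = ↑Fs := by
    ext F
    simp only [hFs, Finset.coe_filter, Finset.mem_Icc, Set.mem_setOf_eq, Pi.le_def]
    exact ⟨fun ⟨a, b⟩ => ⟨⟨fun _ => Nat.zero_le _, a⟩, b⟩, fun ⟨⟨_, a⟩, b⟩ => ⟨a, b⟩⟩
  rw [hsetEq, finsum_mem_coe_finset]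
  unfold Nm
  rw [hfi]
  set FI := firstItems n (i - 1) with hFI
  set A := (insert itm FI).powerset.filter
    (fun P => P.card = k ∧ ∀ u : G, H u = min m ((P.filter (fun j => u ∈ S j)).card)) with hA
  set B := FI.powerset.filter
    (fun Q => Q.card = k - 1 ∧ ∀ u : G, H u =
      min m ((Q.filter (fun j => u ∈ S j)).card + if u ∈ S itm then 1 else 0)) with hB
  have hsplit : (A.filter (fun P => itm ∈ P)).card
      + (A.filter (fun P => ¬ itm ∈ P)).card = A.card :=
    Finset.card_filter_add_card_filter_not _
  -- packages not containing itm
  have hA1 : A.filter (fun P => ¬ itm ∈ P) = FI.powerset.filter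
      (fun P => P.card = k ∧ ∀ u : G, H u = min m ((P.filter (fun j => u ∈ S j)).card)) := by
    ext P
    simp only [hA, Finset.mem_filter, Finset.mem_powerset]
    constructor
    · rintro ⟨⟨hsub, hc⟩, hni⟩
      refine ⟨fun x hx => ?_, hc⟩
      rcases Finset.mem_insert.mp (hsub hx) with h | h
      · exact absurd (h ▸ hx) hni
      · exact h
    · rintro ⟨hsub, hc⟩
      exact ⟨⟨hsub.trans (Finset.subset_insert _ _), hc⟩, fun h => hnm (hsub h)⟩
  -- packages containing itm
  have hA2 : (A.filter (fun P => itm ∈ P)).card = B.card := by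
    refine Finset.card_bij' (fun P _ => P.erase itm) (fun Q _ => insert itm Q) ?hi ?hj ?li ?ri
    case hi =>
      intro P hP
      simp only [hA, Finset.mem_filter, Finset.mem_powerset] at hP
      obtain ⟨⟨hsub, hcard, hcond⟩, hmem⟩ := hP
      have herasenm : itm ∉ P.erase itm := Finset.notMem_erase _ _
      have hPeq : P = insert itm (P.erase itm) := (Finset.insert_erase hmem).symm
      simp only [hB, Finset.mem_filter, Finset.mem_powerset]
      refine ⟨fun x hx => ?_, ?_, fun u => ?_⟩
      · rcases Finset.mem_insert.mp (hsub (Finset.mem_of_mem_erase hx)) with h | h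
        · exact absurd h (Finset.ne_of_mem_erase hx)
        · exact h
      · rw [Finset.card_erase_of_mem hmem, hcard]
      · have hcc := card_filter_insert_aux (P.erase itm) itm herasenm (fun j => u ∈ S j)
        rw [Finset.insert_erase hmem] at hcc
        rw [hcond u, hcc]
    case hj =>
      intro Q hQ
      simp only [hB, Finset.mem_filter, Finset.mem_powerset] at hQ
      obtain ⟨hsub, hcard, hcond⟩ := hQ
      have hni : itm ∉ Q := fun h => hnm (hsub h)
      simp only [Finset.mem_filter]
      refine ⟨?_, Finset.mem_insert_self _ _⟩
      simp only [hA, Finset.mem_filter, Finset.mem_powerset]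
      refine ⟨Finset.insert_subset_insert _ hsub, ?_, fun u => ?_⟩
      · rw [Finset.card_insert_of_notMem hni, hcard]; omega
      · rw [hcond u, card_filter_insert_aux _ _ hni]
    case li =>
      intro P hP
      exact Finset.insert_erase (Finset.mem_filter.mp hP).2
    case ri =>
      intro Q hQ
      apply Finset.erase_insert
      intro h
      exact hnm ((Finset.mem_powerset.mp (Finset.mem_filter.mp hQ).1) h)
  -- B is the disjoint union over F
  have hBU : B = Fs.biUnion (fun F => FI.powerset.filter
      (fun Q => Q.card = k - 1 ∧ ∀ u : G, F u = min m ((Q.filter (fun j => u ∈ S j)).card))) := by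
    ext Q
    simp only [hB, hFs, Finset.mem_biUnion, Finset.mem_filter, Finset.mem_powerset,
      Finset.mem_Icc, Pi.le_def]
    constructor
    · rintro ⟨hsub, hcard, hcond⟩
      refine ⟨fun u => min m ((Q.filter (fun j => u ∈ S j)).card),
        ⟨⟨fun u => Nat.zero_le _, fun u => min_le_left _ _⟩, fun u => ?_⟩,
        hsub, hcard, fun u => rfl⟩
      show H u = min m (min m ((Q.filter (fun j => u ∈ S j)).card) + if u ∈ S itm then 1 else 0)
      rw [hcond u]
      omega
    · rintro ⟨F, ⟨⟨_, hle⟩, hcond⟩, hsub, hcard, hF⟩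
      refine ⟨hsub, hcard, fun u => ?_⟩
      rw [hcond u, hF u]
      omega
  have hdisj : ∀ F₁ ∈ Fs, ∀ F₂ ∈ Fs, F₁ ≠ F₂ → Disjoint
      (FI.powerset.filter
        (fun Q => Q.card = k - 1 ∧ ∀ u : G, F₁ u = min m ((Q.filter (fun j => u ∈ S j)).card)))
      (FI.powerset.filter
        (fun Q => Q.card = k - 1 ∧ ∀ u : G, F₂ u = min m ((Q.filter (fun j => u ∈ S j)).card))) := by
    intro F₁ _ F₂ _ hne
    rw [Finset.disjoint_left]
    intro Q hQ1 hQ2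
    apply hne
    funext u
    rw [(Finset.mem_filter.mp hQ1).2.2 u, (Finset.mem_filter.mp hQ2).2.2 u]
  have hcardB : B.card = ∑ F ∈ Fs, (FI.powerset.filter
      (fun Q => Q.card = k - 1 ∧ ∀ u : G, F u = min m ((Q.filter (fun j => u ∈ S j)).card))).card := by
    rw [hBU]
    exact Finset.card_biUnion hdisj
  rw [← hsplit, hA1, hA2, hcardB]
  exact Nat.add_comm _ _
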